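/- Let ψ : (0,∞)³ → ℝ be defined by ψ(η₁,η₂,η₃) = ¼(η₁ ln η₁ + η₂ ln η₂ + η₃ ln η₃). Then the matrix of second partial derivatives of ψ at η is diag(1/(4η₁), 1/(4η₂), 1/(4η₃)), and for all x, y, z > 0, with J(x,y,z) = diag(2x, 2y, 2z) the Jacobian of (x,y,z) ↦ (x², y², z²), one has J(x,y,z)ᵀ · Hess ψ(x², y², z²) · J(x,y,z) equal to the 3×3 identity matrix; i.e. (x², y², z²) are Hessian coordinates for Euclidean 3-space with Hessian potential ψ. (This is the Smorodinski–Winternitz system (I).) -/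

import Mathlib

open Real Set Matrix

/-- The Hessian potential of the Smorodinski–Winternitz system (I)
in its Hessian coordinates. -/
noncomputable def ψ (a b c : ℝ) : ℝ := (a * log a + b * log b + c * log c) / 4

/-- Partial derivative with respect to the first variable. -/
noncomputable def d1 (f : ℝ → ℝ → ℝ → ℝ) (a b c : ℝ) : ℝ := deriv (fun s => f s b c) a

/-- Partial derivative with respect to the second variable. -/
noncomputable def d2 (f : ℝ → ℝ → ℝ → ℝ) (a b c : ℝ) : ℝ := deriv (fun s => f a s c) b

/-- Partial derivative with respect to the third variable. -/
noncomputable def d3 (f : ℝ → ℝ → ℝ → ℝ) (a b c : ℝ) : ℝ := deriv (fun s => f a b s) c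

/-- The matrix of second partial derivatives of a function of three variables. -/
noncomputable def Hess (f : ℝ → ℝ → ℝ → ℝ) (a b c : ℝ) : Matrix (Fin 3) (Fin 3) ℝ :=
  !![d1 (d1 f) a b c, d1 (d2 f) a b c, d1 (d3 f) a b c;
     d2 (d1 f) a b c, d2 (d2 f) a b c, d2 (d3 f) a b c;
     d3 (d1 f) a b c, d3 (d2 f) a b c, d3 (d3 f) a b c]

/-- The Jacobian matrix of the coordinate change `(x,y,z) ↦ (x², y², z²)`. -/
noncomputable def J (x y z : ℝ) : Matrix (Fin 3) (Fin 3) ℝ :=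
  !![2 * x, 0, 0; 0, 2 * y, 0; 0, 0, 2 * z]

lemma hasDerivAt_xlogx {t : ℝ} (ht : 0 < t) :
    HasDerivAt (fun s : ℝ => s * log s) (log t + 1) t := by
  have h := (hasDerivAt_id t).mul (Real.hasDerivAt_log ht.ne')
  exact h.congr_deriv (by simp [mul_inv_cancel₀ ht.ne'])

lemma deriv_aux (K : ℝ) {t : ℝ} (ht : 0 < t) :
    deriv (fun s : ℝ => (s * log s + K) / 4) t = (log t + 1) / 4 := by
  have h : HasDerivAt (fun s : ℝ => (s * log s + K) / 4) ((log t + 1) / 4) t :=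
    ((hasDerivAt_xlogx ht).add_const K).div_const 4
  exact h.deriv

lemma d1ψ {a : ℝ} (ha : 0 < a) (b c : ℝ) : d1 ψ a b c = (log a + 1) / 4 := by
  have : (fun s => ψ s b c) = fun s : ℝ => (s * log s + (b * log b + c * log c)) / 4 := by
    funext s; simp [ψ]; ring
  rw [d1, this, deriv_aux _ ha]

lemma d2ψ (a : ℝ) {b : ℝ} (hb : 0 < b) (c : ℝ) : d2 ψ a b c = (log b + 1) / 4 := by
  have : (fun s => ψ a s c) = fun s : ℝ => (s * log s + (a * log a + c * log c)) / 4 := by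
    funext s; simp [ψ]; ring
  rw [d2, this, deriv_aux _ hb]

lemma d3ψ (a b : ℝ) {c : ℝ} (hc : 0 < c) : d3 ψ a b c = (log c + 1) / 4 := by
  have : (fun s => ψ a b s) = fun s : ℝ => (s * log s + (a * log a + b * log b)) / 4 := by
    funext s; simp [ψ]; ring
  rw [d3, this, deriv_aux _ hc]

lemma deriv_log4 {t : ℝ} (ht : 0 < t) :
    deriv (fun s : ℝ => (log s + 1) / 4) t = 1 / (4 * t) := by
  have h : HasDerivAt (fun s : ℝ => (log s + 1) / 4) (t⁻¹ / 4) t :=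
    ((Real.hasDerivAt_log ht.ne').add_const 1).div_const 4
  rw [h.deriv]; field_simp

lemma hess_eq {a b c : ℝ} (ha : 0 < a) (hb : 0 < b) (hc : 0 < c) :
    Hess ψ a b c = !![1 / (4 * a), 0, 0; 0, 1 / (4 * b), 0; 0, 0, 1 / (4 * c)] := by
  have e1 : d1 (d1 ψ) a b c = 1 / (4 * a) := by
    have : (fun s => d1 ψ s b c) =ᶠ[nhds a] fun s : ℝ => (log s + 1) / 4 := by
      filter_upwards [eventually_gt_nhds ha] with s hs using d1ψ hs b c
    rw [d1, this.deriv_eq, deriv_log4 ha]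
  have e2 : d2 (d2 ψ) a b c = 1 / (4 * b) := by
    have : (fun s => d2 ψ a s c) =ᶠ[nhds b] fun s : ℝ => (log s + 1) / 4 := by
      filter_upwards [eventually_gt_nhds hb] with s hs using d2ψ a hs c
    rw [d2, this.deriv_eq, deriv_log4 hb]
  have e3 : d3 (d3 ψ) a b c = 1 / (4 * c) := by
    have : (fun s => d3 ψ a b s) =ᶠ[nhds c] fun s : ℝ => (log s + 1) / 4 := by
      filter_upwards [eventually_gt_nhds hc] with s hs using d3ψ a b hs
    rw [d3, this.deriv_eq, deriv_log4 hc]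
  have m12 : d1 (d2 ψ) a b c = 0 := by
    have : (fun s => d2 ψ s b c) = fun _ : ℝ => (log b + 1) / 4 := by
      funext s; exact d2ψ s hb c
    rw [d1, this, deriv_const]
  have m13 : d1 (d3 ψ) a b c = 0 := by
    have : (fun s => d3 ψ s b c) = fun _ : ℝ => (log c + 1) / 4 := by
      funext s; exact d3ψ s b hc
    rw [d1, this, deriv_const]
  have m21 : d2 (d1 ψ) a b c = 0 := by
    have : (fun s => d1 ψ a s c) = fun _ : ℝ => (log a + 1) / 4 := by
      funext s; exact d1ψ ha s c
    rw [d2, this, deriv_const]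
  have m23 : d2 (d3 ψ) a b c = 0 := by
    have : (fun s => d3 ψ a s c) = fun _ : ℝ => (log c + 1) / 4 := by
      funext s; exact d3ψ a s hc
    rw [d2, this, deriv_const]
  have m31 : d3 (d1 ψ) a b c = 0 := by
    have : (fun s => d1 ψ a b s) = fun _ : ℝ => (log a + 1) / 4 := by
      funext s; exact d1ψ ha b s
    rw [d3, this, deriv_const]
  have m32 : d3 (d2 ψ) a b c = 0 := by
    have : (fun s => d2 ψ a b s) = fun _ : ℝ => (log b + 1) / 4 := by
      funext s; exact d2ψ a hb s
    rw [d3, this, deriv_const]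
  rw [Hess, e1, e2, e3, m12, m13, m21, m23, m31, m32]

/-- For `ψ(η) = ¼(η₁ ln η₁ + η₂ ln η₂ + η₃ ln η₃)` on `(0,∞)³`, the matrix of
second partial derivatives is `diag(1/(4η₁), 1/(4η₂), 1/(4η₃))`, and
`(x², y², z²)` are Hessian coordinates for Euclidean 3-space with Hessian
potential `ψ`: `Jᵀ · Hess ψ(x²,y²,z²) · J = I₃`. -/
theorem sw_I_hessian_coordinates :
    (∀ a b c : ℝ, 0 < a → 0 < b → 0 < c →
      Hess ψ a b c = !![1 / (4 * a), 0, 0; 0, 1 / (4 * b), 0; 0, 0, 1 / (4 * c)]) ∧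
    ∀ x y z : ℝ, 0 < x → 0 < y → 0 < z →
      (J x y z)ᵀ * Hess ψ (x ^ 2) (y ^ 2) (z ^ 2) * J x y z = 1 := by
  constructor
  · exact fun a b c ha hb hc => hess_eq ha hb hc
  · intro x y z hx hy hz
    have hT : (_root_.J x y z)ᵀ = _root_.J x y z := by
      ext i j; fin_cases i <;> fin_cases j <;> simp [_root_.J, Matrix.vecHead, Matrix.vecTail]
    rw [hess_eq (pow_pos hx 2) (pow_pos hy 2) (pow_pos hz 2), hT, _root_.J]
    ext i j
    fin_cases i <;> fin_cases j <;>
      · simp [Matrix.mul_apply, Fin.sum_univ_three, Matrix.one_apply, Matrix.vecHead, Matrix.vecTail]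
        try field_simp
        try ring
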